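/- arXiv:1201.5811 — 2 statements merged into one kernel-verified Lean document; each statement's English description precedes it below -/
import Mathlib

section
/- The least general model over a first-order model M is (M, L), where L is exactly the set of teams of the form ‖φ(x̄, m̄)‖_M = {s : Dom(s) = x̄, M ⊨_s φ(x̄, m̄)} for first-order formulas φ and tuples of element parameters m̄ from M; that is, this L satisfies the general-model closure condition, and L ⊆ G for every general model (M, G). -/
namespace IndepGeneral

/-! ## First-order signatures, terms, formulas (with team and parameter
variables, and constant parameters of type `C`) -/

structure Sig : Type 1 where
  Func : Type
  Rel : Type

structure Str (σ : Sig) (M : Type) : Type where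
  funcI : σ.Func → List M → M
  relI : σ.Rel → List M → Prop

inductive Term (σ : Sig) (C : Type) : Type where
  | varT : ℕ → Term σ C
  | varP : ℕ → Term σ C
  | const : C → Term σ C
  | app : σ.Func → List (Term σ C) → Term σ C

inductive FO (σ : Sig) (C : Type) : Type where
  | eq : Term σ C → Term σ C → FO σ C
  | rel : σ.Rel → List (Term σ C) → FO σ C
  | not : FO σ C → FO σ C
  | and : FO σ C → FO σ C → FO σ C
  | or : FO σ C → FO σ C → FO σ C
  | exT : ℕ → FO σ C → FO σ C
  | allT : ℕ → FO σ C → FO σ C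
  | exP : ℕ → FO σ C → FO σ C
  | allP : ℕ → FO σ C → FO σ C

variable {σ τ : Sig} {C M : Type}

def Term.eval (I : Str σ M) (cv : C → M) (h s : ℕ → M) : Term σ C → M
  | .varT n => s n
  | .varP n => h n
  | .const c => cv c
  | .app f ts => I.funcI f (ts.attach.map (fun t => t.1.eval I cv h s))
decreasing_by
  have := List.sizeOf_lt_of_mem t.2
  simp_wf
  omega

/-- Tarskian satisfaction; `h` assigns parameter variables, `s` team variables. -/
def FO.Sat (I : Str σ M) (cv : C → M) : (ℕ → M) → (ℕ → M) → FO σ C → Prop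
  | h, s, .eq t u => t.eval I cv h s = u.eval I cv h s
  | h, s, .rel R ts => I.relI R (ts.map (Term.eval I cv h s))
  | h, s, .not φ => ¬ FO.Sat I cv h s φ
  | h, s, .and φ ψ => FO.Sat I cv h s φ ∧ FO.Sat I cv h s ψ
  | h, s, .or φ ψ => FO.Sat I cv h s φ ∨ FO.Sat I cv h s ψ
  | h, s, .exT x φ => ∃ m, FO.Sat I cv h (Function.update s x m) φ
  | h, s, .allT x φ => ∀ m, FO.Sat I cv h (Function.update s x m) φ
  | h, s, .exP p φ => ∃ m, FO.Sat I cv (Function.update h p m) s φ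
  | h, s, .allP p φ => ∀ m, FO.Sat I cv (Function.update h p m) s φ

def Term.freeT : Term σ C → Finset ℕ
  | .varT n => {n}
  | .varP _ => ∅
  | .const _ => ∅
  | .app _ ts => ts.attach.foldr (fun t acc => t.1.freeT ∪ acc) ∅
decreasing_by
  have := List.sizeOf_lt_of_mem t.2
  simp_wf
  omega

def Term.freeP : Term σ C → Finset ℕ
  | .varT _ => ∅
  | .varP n => {n}
  | .const _ => ∅
  | .app _ ts => ts.attach.foldr (fun t acc => t.1.freeP ∪ acc) ∅
decreasing_by
  have := List.sizeOf_lt_of_mem t.2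
  simp_wf
  omega

def Term.listFreeT (ts : List (Term σ C)) : Finset ℕ :=
  ts.foldr (fun t acc => t.freeT ∪ acc) ∅

/-- Free team variables of a first-order formula. -/
def FO.freeT : FO σ C → Finset ℕ
  | .eq t u => t.freeT ∪ u.freeT
  | .rel _ ts => Term.listFreeT ts
  | .not φ => φ.freeT
  | .and φ ψ => φ.freeT ∪ ψ.freeT
  | .or φ ψ => φ.freeT ∪ ψ.freeT
  | .exT x φ => φ.freeT.erase x
  | .allT x φ => φ.freeT.erase x
  | .exP _ φ => φ.freeT
  | .allP _ φ => φ.freeT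

/-- Free parameter variables of a first-order formula. -/
def FO.freeP : FO σ C → Finset ℕ
  | .eq t u => t.freeP ∪ u.freeP
  | .rel _ ts => ts.foldr (fun t acc => t.freeP ∪ acc) ∅
  | .not φ => φ.freeP
  | .and φ ψ => φ.freeP ∪ ψ.freeP
  | .or φ ψ => φ.freeP ∪ ψ.freeP
  | .exT _ φ => φ.freeP
  | .allT _ φ => φ.freeP
  | .exP p φ => φ.freeP.erase p
  | .allP p φ => φ.freeP.erase p

/-! ## Teams -/

def agreeOn (V : Finset ℕ) (f g : ℕ → M) : Prop := ∀ x ∈ V, f x = g x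

/-- A team with (finite) domain `dom`: a set of assignments which only
depends on the values taken on `dom`. -/
structure Team (M : Type) : Type where
  dom : Finset ℕ
  rows : Set (ℕ → M)
  mem_congr : ∀ ⦃s s' : ℕ → M⦄, agreeOn dom s s' → s ∈ rows → s' ∈ rows

/-- `Rel(X)`: the relation (set of tuples, listed in increasing variable
order of the domain) corresponding to a team. -/
def Team.relOf (X : Team M) : List M → Prop :=
  fun l => ∃ s ∈ X.rows, l = (X.dom.sort (· ≤ ·)).map s

/-- The team `‖φ‖` defined by a first-order formula, on the domain `V`. -/
def teamOf (I : Str σ M) (cv : C → M) (h : ℕ → M) (φ : FO σ C) (V : Finset ℕ) : Team M where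
  dom := V
  rows := { s | ∀ s', agreeOn V s s' → FO.Sat I cv h s' φ }
  mem_congr := by
    intro s s' hag hs t hat
    exact hs t (fun x hx => (hag x hx).trans (hat x hx))

/-! ## General models -/

/-- Adding `k` fresh relation symbols to a signature. -/
def Sig.addRels (σ : Sig) (k : ℕ) : Sig := ⟨σ.Func, σ.Rel ⊕ Fin k⟩

/-- Expanding a structure by interpreting the fresh relation symbols as the
relations `Rel(Xᵢ)` of given teams. -/
def Str.addRels (I : Str σ M) {k : ℕ} (Xs : Fin k → Team M) : Str (σ.addRels k) M :=
  ⟨I.funcI, Sum.elim I.relI (fun i l => (Xs i).relOf l)⟩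

/-- `(M, G)` is a general model: `G` is closed under first-order
definability with element parameters (constants from `M` and values of the
parameter variables) and relation parameters `Rel(Xᵢ)` for teams `Xᵢ ∈ G`. -/
def IsGenModel (I : Str σ M) (G : Set (Team M)) : Prop :=
  ∀ (k : ℕ) (Xs : Fin k → Team M), (∀ i, Xs i ∈ G) →
    ∀ (φ : FO (σ.addRels k) M) (h : ℕ → M) (V : Finset ℕ),
      φ.freeT ⊆ V → teamOf (I.addRels Xs) id h φ V ∈ G

/-- The least general model over `M`. -/
def Least (I : Str σ M) : Set (Team M) := ⋂₀ { G | IsGenModel I G }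

/-- Teams definable by a first-order formula with element parameters. -/
def LDef (I : Str σ M) : Set (Team M) :=
  { X | ∃ (φ : FO σ M) (h : ℕ → M), φ.freeT ⊆ X.dom ∧ X = teamOf I id h φ X.dom }

/-! ## Independence logic syntax -/

inductive IF (σ : Sig) : Type where
  | lit : Bool → σ.Rel → List (Term σ Empty) → IF σ
  | eqLit : Bool → Term σ Empty → Term σ Empty → IF σ
  | indep : List (Term σ Empty) → List (Term σ Empty) → List (Term σ Empty) → IF σ
  | or : IF σ → IF σ → IF σ
  | and : IF σ → IF σ → IF σ
  | ex : ℕ → IF σ → IF σ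
  | all : ℕ → IF σ → IF σ

def IF.free : IF σ → Finset ℕ
  | .lit _ _ ts => Term.listFreeT ts
  | .eqLit _ t u => t.freeT ∪ u.freeT
  | .indep t1 t2 t3 => Term.listFreeT (t1 ++ t2 ++ t3)
  | .or φ ψ => φ.free ∪ ψ.free
  | .and φ ψ => φ.free ∪ ψ.free
  | .ex x φ => φ.free.erase x
  | .all x φ => φ.free.erase x

/-- Value of an (independence-logic) term under a team assignment. -/
def tval (I : Str σ M) (s : ℕ → M) (t : Term σ Empty) : M :=
  t.eval I Empty.elim s s

def tvals (I : Str σ M) (s : ℕ → M) (ts : List (Term σ Empty)) : List M :=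
  ts.map (tval I s)

def litSat (I : Str σ M) (s : ℕ → M) : Bool → σ.Rel → List (Term σ Empty) → Prop
  | true, R, ts => I.relI R (tvals I s ts)
  | false, R, ts => ¬ I.relI R (tvals I s ts)

/-! ## Team operations -/

/-- Restriction `X|V` of a team to a set of variables. -/
def Team.restrict (X : Team M) (V : Finset ℕ) : Team M where
  dom := X.dom ∩ V
  rows := { s | ∃ s₀ ∈ X.rows, agreeOn (X.dom ∩ V) s s₀ }
  mem_congr := by
    rintro s s' hag ⟨s₀, h₀, ha⟩
    exact ⟨s₀, h₀, fun x hx => ((hag x hx).symm).trans (ha x hx)⟩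

/-- The team `X[M/x]` where `x` takes all values of the model. -/
def Team.allExt (X : Team M) (x : ℕ) : Team M where
  dom := insert x X.dom
  rows := { s | ∃ s₀ ∈ X.rows, ∀ v ∈ X.dom, v ≠ x → s v = s₀ v }
  mem_congr := by
    rintro s s' hag ⟨s₀, h₀, ha⟩
    refine ⟨s₀, h₀, fun v hv hne => ?_⟩
    rw [← hag v (Finset.mem_insert_of_mem hv)]
    exact ha v hv hne

/-- The team `X(x̄ ∈ Y)` of members of `X` whose restriction to the domain
of `Y` belongs to `Y`. -/
def Team.select (X Y : Team M) : Team M where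
  dom := X.dom
  rows := { s | s ∈ X.rows ∧ ∃ s' ∈ Y.rows, ∀ v ∈ X.dom, v ∈ Y.dom → s v = s' v }
  mem_congr := by
    rintro s t hag ⟨hs, s', hs', ha⟩
    refine ⟨X.mem_congr hag hs, s', hs', fun v hv hv' => ?_⟩
    rw [← hag v hv]
    exact ha v hv hv'

/-- `X[x]X'`: `X'` is an `x`-variation of `X`. -/
def Varies (X : Team M) (x : ℕ) (X' : Team M) : Prop :=
  X'.dom = insert x X.dom ∧
    X.restrict (X.dom.erase x) = X'.restrict (X.dom.erase x)

/-- `X = Y ∪ Z` as teams over the same domain. -/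
def SplitOf (X Y Z : Team M) : Prop :=
  Y.dom = X.dom ∧ Z.dom = X.dom ∧ X.rows = Y.rows ∪ Z.rows

/-! ## General team semantics and standard team semantics -/

/-- General team semantics `(M, G) ⊨_X φ`. -/
def GSat (I : Str σ M) (G : Set (Team M)) : IF σ → Team M → Prop
  | .lit b R ts, X => ∀ s ∈ X.rows, litSat I s b R ts
  | .eqLit b t u, X => ∀ s ∈ X.rows,
      (if b then tval I s t = tval I s u else tval I s t ≠ tval I s u)
  | .indep t1 t2 t3, X => ∀ s ∈ X.rows, ∀ s' ∈ X.rows,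
      tvals I s t1 = tvals I s' t1 →
      ∃ s'' ∈ X.rows, tvals I s'' (t1 ++ t2) = tvals I s (t1 ++ t2) ∧
        tvals I s'' (t1 ++ t3) = tvals I s' (t1 ++ t3)
  | .or φ ψ, X => ∃ Y ∈ G, ∃ Z ∈ G, SplitOf X Y Z ∧ GSat I G φ Y ∧ GSat I G ψ Z
  | .and φ ψ, X => GSat I G φ X ∧ GSat I G ψ X
  | .ex x φ, X => ∃ X' ∈ G, Varies X x X' ∧ GSat I G φ X'
  | .all x φ, X => GSat I G φ (X.allExt x)

/-- Standard team semantics `M ⊨_X φ`. -/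
def TSat (I : Str σ M) : IF σ → Team M → Prop
  | .lit b R ts, X => ∀ s ∈ X.rows, litSat I s b R ts
  | .eqLit b t u, X => ∀ s ∈ X.rows,
      (if b then tval I s t = tval I s u else tval I s t ≠ tval I s u)
  | .indep t1 t2 t3, X => ∀ s ∈ X.rows, ∀ s' ∈ X.rows,
      tvals I s t1 = tvals I s' t1 →
      ∃ s'' ∈ X.rows, tvals I s'' (t1 ++ t2) = tvals I s (t1 ++ t2) ∧
        tvals I s'' (t1 ++ t3) = tvals I s' (t1 ++ t3)
  | .or φ ψ, X => ∃ Y Z, SplitOf X Y Z ∧ TSat I φ Y ∧ TSat I ψ Z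
  | .and φ ψ, X => TSat I φ X ∧ TSat I ψ X
  | .ex x φ, X => ∃ X', Varies X x X' ∧ TSat I φ X'
  | .all x φ, X => TSat I φ (X.allExt x)

/-! ## Signature morphisms (signature extensions) -/

structure SigHom (σ τ : Sig) : Type where
  fm : σ.Func → τ.Func
  rm : σ.Rel → τ.Rel

def Term.mapSig (e : SigHom σ τ) : Term σ C → Term τ C
  | .varT n => .varT n
  | .varP n => .varP n
  | .const c => .const c
  | .app f ts => .app (e.fm f) (ts.attach.map fun t => t.1.mapSig e)
decreasing_by
  have := List.sizeOf_lt_of_mem t.2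
  simp_wf
  omega

def FO.mapSig (e : SigHom σ τ) : FO σ C → FO τ C
  | .eq t u => .eq (t.mapSig e) (u.mapSig e)
  | .rel R ts => .rel (e.rm R) (ts.map (Term.mapSig e))
  | .not φ => .not (φ.mapSig e)
  | .and φ ψ => .and (φ.mapSig e) (ψ.mapSig e)
  | .or φ ψ => .or (φ.mapSig e) (ψ.mapSig e)
  | .exT x φ => .exT x (φ.mapSig e)
  | .allT x φ => .allT x (φ.mapSig e)
  | .exP p φ => .exP p (φ.mapSig e)
  | .allP p φ => .allP p (φ.mapSig e)

def IF.mapSig (e : SigHom σ τ) : IF σ → IF τ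
  | .lit b R ts => .lit b (e.rm R) (ts.map (Term.mapSig e))
  | .eqLit b t u => .eqLit b (t.mapSig e) (u.mapSig e)
  | .indep t1 t2 t3 =>
      .indep (t1.map (Term.mapSig e)) (t2.map (Term.mapSig e)) (t3.map (Term.mapSig e))
  | .or φ ψ => .or (φ.mapSig e) (ψ.mapSig e)
  | .and φ ψ => .and (φ.mapSig e) (ψ.mapSig e)
  | .ex x φ => .ex x (φ.mapSig e)
  | .all x φ => .all x (φ.mapSig e)

/-- The `σ`-reduct of a `τ`-structure along `e : SigHom σ τ`. -/
def Str.reduct (e : SigHom σ τ) (I : Str τ M) : Str σ M :=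
  ⟨fun f => I.funcI (e.fm f), fun R => I.relI (e.rm R)⟩

def inlHom (σ : Sig) (k : ℕ) : SigHom σ (σ.addRels k) := ⟨id, Sum.inl⟩

/-! ## Entailment semantics -/

/-- Entailment semantics `M ⊨_{γ(h)} φ`: the independence logic formula `φ`
holds of the team defined by the first-order team definition `γ` under the
parameter assignment `h`. -/
def ES (I : Str σ M) : IF σ → FO σ Empty → (ℕ → M) → Prop
  | .lit b R ts, γ, h => ∀ s, FO.Sat I Empty.elim h s γ → litSat I s b R ts
  | .eqLit b t u, γ, h => ∀ s, FO.Sat I Empty.elim h s γ →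
      (if b then tval I s t = tval I s u else tval I s t ≠ tval I s u)
  | .indep t1 t2 t3, γ, h => ∀ s s', FO.Sat I Empty.elim h s γ →
      FO.Sat I Empty.elim h s' γ → tvals I s t1 = tvals I s' t1 →
      ∃ s'', FO.Sat I Empty.elim h s'' γ ∧
        tvals I s'' (t1 ++ t2) = tvals I s (t1 ++ t2) ∧
        tvals I s'' (t1 ++ t3) = tvals I s' (t1 ++ t3)
  | .or φ ψ, γ, h => ∃ (h' : ℕ → M) (γ₁ γ₂ : FO σ Empty), agreeOn γ.freeP h h' ∧
      ES I φ γ₁ h' ∧ ES I ψ γ₂ h' ∧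
      (∀ s, FO.Sat I Empty.elim h' s γ ↔
        (FO.Sat I Empty.elim h' s γ₁ ∨ FO.Sat I Empty.elim h' s γ₂))
  | .and φ ψ, γ, h => ES I φ γ h ∧ ES I ψ γ h
  | .ex x φ, γ, h => ∃ (h' : ℕ → M) (γ' : FO σ Empty), agreeOn γ.freeP h h' ∧
      ES I φ γ' h' ∧
      (∀ s, (∃ m, FO.Sat I Empty.elim h' (Function.update s x m) γ') ↔
            (∃ m, FO.Sat I Empty.elim h' (Function.update s x m) γ))
  | .all x φ, γ, h => ∃ (h' : ℕ → M) (γ' : FO σ Empty), agreeOn γ.freeP h h' ∧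
      ES I φ γ' h' ∧
      (∀ s, FO.Sat I Empty.elim h' s γ' ↔
            ∃ m, FO.Sat I Empty.elim h' (Function.update s x m) γ)

/-! ## The proof system -/

def FO.impl (a b : FO σ C) : FO σ C := .or a.not b
def FO.iffF (a b : FO σ C) : FO σ C := .and (a.impl b) (b.impl a)
def FO.verum : FO σ C := .allT 0 (.eq (.varT 0) (.varT 0))
def bigAnd (Γ : List (FO σ C)) : FO σ C := Γ.foldr .and FO.verum
def allTs (l : List ℕ) (φ : FO σ C) : FO σ C := l.foldr FO.allT φ
def exTs (l : List ℕ) (φ : FO σ C) : FO σ C := l.foldr FO.exT φ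
/-- Universal closure over all free team variables. -/
def FO.uclose (φ : FO σ C) : FO σ C := allTs (φ.freeT.sort (· ≤ ·)) φ

def Term.renT (f : ℕ → ℕ) : Term σ C → Term σ C
  | .varT n => .varT (f n)
  | .varP n => .varP n
  | .const c => .const c
  | .app g ts => .app g (ts.attach.map fun t => t.1.renT f)
decreasing_by
  have := List.sizeOf_lt_of_mem t.2
  simp_wf
  omega

/-- Renaming of the team variables of a formula (sound for injective
renamings). -/
def FO.renT (f : ℕ → ℕ) : FO σ C → FO σ C
  | .eq t u => .eq (t.renT f) (u.renT f)
  | .rel R ts => .rel R (ts.map (Term.renT f))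
  | .not φ => .not (φ.renT f)
  | .and φ ψ => .and (φ.renT f) (ψ.renT f)
  | .or φ ψ => .or (φ.renT f) (ψ.renT f)
  | .exT x φ => .exT (f x) (φ.renT f)
  | .allT x φ => .allT (f x) (φ.renT f)
  | .exP p φ => .exP p (φ.renT f)
  | .allP p φ => .allP p (φ.renT f)

/-- Conjunction of pointwise equalities of two tuples of terms. -/
def eqL (l1 l2 : List (Term σ C)) : FO σ C := bigAnd (List.zipWith FO.eq l1 l2)

/-- The `j`-th disjoint renaming `v̄ⱼ` of the team variables. -/
def copyF (j : ℕ) : ℕ → ℕ := fun v => 3 * v + j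

def rents (j : ℕ) (ts : List (Term σ C)) : List (Term σ C) :=
  ts.map (Term.renT (copyF j))

def litFO : Bool → σ.Rel → List (Term σ Empty) → FO σ Empty
  | true, R, ts => .rel R ts
  | false, R, ts => .not (.rel R ts)

def eqlitFO : Bool → Term σ Empty → Term σ Empty → FO σ Empty
  | true, t, u => .eq t u
  | false, t, u => .not (.eq t u)

/-- The first-order antecedent of the axiom **PS-ind**. -/
def indAx (γ : FO σ Empty) (t1 t2 t3 : List (Term σ Empty)) : FO σ Empty :=
  let V := (γ.freeT ∪ Term.listFreeT (t1 ++ t2 ++ t3)).sort (· ≤ ·)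
  FO.uclose <| FO.impl
    (FO.and (FO.and (γ.renT (copyF 0)) (γ.renT (copyF 1)))
            (eqL (rents 0 t1) (rents 1 t1)))
    (exTs (V.map (copyF 2))
      (FO.and (γ.renT (copyF 2))
        (FO.and (eqL (rents 2 (t1 ++ t2)) (rents 0 (t1 ++ t2)))
                (eqL (rents 2 (t1 ++ t3)) (rents 1 (t1 ++ t3))))))

/-- First-order (semantic) entailment between finite theories. -/
def FOcons (Γ' Γ : List (FO σ Empty)) : Prop :=
  ∀ (M : Type) (I : Str σ M) (h s : ℕ → M),
    (∀ ψ ∈ Γ', FO.Sat I Empty.elim h s ψ) → ∀ ψ ∈ Γ, FO.Sat I Empty.elim h s ψ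

/-! ## Relation existence theories -/

/-- A relation existence theory: each element `⟨k, θ⟩` stands for the
existential second-order sentence `∃R₁…R_k θ(R̄)`. -/
abbrev Theory (σ : Sig) : Type := Set ((k : ℕ) × FO (σ.addRels k) Empty)

/-- `Θ`-closure of a general model. -/
def ThetaClosed (Θ : Theory σ) (I : Str σ M) (G : Set (Team M)) : Prop :=
  ∀ p ∈ Θ, ∃ Xs : Fin p.1 → Team M, (∀ i, Xs i ∈ G) ∧
    ∀ (h s : ℕ → M), FO.Sat (I.addRels Xs) Empty.elim h s p.2

/-- Instantiating the `k` extra relation symbols by relation symbols of `σ`. -/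
def instRels {k : ℕ} (S : Fin k → σ.Rel) : FO (σ.addRels k) C → FO σ C :=
  FO.mapSig ⟨id, Sum.elim id S⟩

def FO.rels : FO σ C → Set σ.Rel
  | .eq _ _ => ∅
  | .rel R _ => {R}
  | .not φ => φ.rels
  | .and φ ψ => φ.rels ∪ ψ.rels
  | .or φ ψ => φ.rels ∪ ψ.rels
  | .exT _ φ => φ.rels
  | .allT _ φ => φ.rels
  | .exP _ φ => φ.rels
  | .allP _ φ => φ.rels

def IF.rels : IF σ → Set σ.Rel
  | .lit _ R _ => {R}
  | .eqLit _ _ _ => ∅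
  | .indep _ _ _ => ∅
  | .or φ ψ => φ.rels ∪ ψ.rels
  | .and φ ψ => φ.rels ∪ ψ.rels
  | .ex _ φ => φ.rels
  | .all _ φ => φ.rels

def relsList (Γ : List (FO σ C)) : Set σ.Rel := { R | ∃ ψ ∈ Γ, R ∈ ψ.rels }

/-- The proof system (sequent calculus) of the paper, augmented by the rule
**PS-Θ** for a relation existence theory `Θ` (for `Θ = ∅` this is exactly
the basic proof system). -/
inductive DerivT (Θ : Theory σ) : List (FO σ Empty) → FO σ Empty → IF σ → Prop where
  | lit (γ : FO σ Empty) (b : Bool) (R : σ.Rel) (ts : List (Term σ Empty)) :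
      DerivT Θ [(γ.impl (litFO b R ts)).uclose] γ (.lit b R ts)
  | eqlit (γ : FO σ Empty) (b : Bool) (t u : Term σ Empty) :
      DerivT Θ [(γ.impl (eqlitFO b t u)).uclose] γ (.eqLit b t u)
  | ind (γ : FO σ Empty) (t1 t2 t3 : List (Term σ Empty)) :
      DerivT Θ [indAx γ t1 t2 t3] γ (.indep t1 t2 t3)
  | orI {Γ₁ Γ₂ : List (FO σ Empty)} {γ₁ γ₂ : FO σ Empty} {φ₁ φ₂ : IF σ}
      (γ : FO σ Empty) :
      DerivT Θ Γ₁ γ₁ φ₁ → DerivT Θ Γ₂ γ₂ φ₂ →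
      DerivT Θ (Γ₁ ++ Γ₂ ++ [(γ.iffF (γ₁.or γ₂)).uclose]) γ (.or φ₁ φ₂)
  | andI {Γ₁ Γ₂ : List (FO σ Empty)} {γ : FO σ Empty} {φ₁ φ₂ : IF σ} :
      DerivT Θ Γ₁ γ φ₁ → DerivT Θ Γ₂ γ φ₂ → DerivT Θ (Γ₁ ++ Γ₂) γ (.and φ₁ φ₂)
  | exI {Γ : List (FO σ Empty)} {γ' : FO σ Empty} {φ : IF σ} (x : ℕ) (γ : FO σ Empty) :
      DerivT Θ Γ γ' φ →
      DerivT Θ (Γ ++ [((FO.exT x γ').iffF (FO.exT x γ)).uclose]) γ (.ex x φ)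
  | allI {Γ : List (FO σ Empty)} {γ' : FO σ Empty} {φ : IF σ} (x : ℕ) (γ : FO σ Empty) :
      DerivT Θ Γ γ' φ →
      DerivT Θ (Γ ++ [(γ'.iffF (FO.exT x γ)).uclose]) γ (.all x φ)
  | ent {Γ : List (FO σ Empty)} {γ : FO σ Empty} {φ : IF σ} (Γ' : List (FO σ Empty)) :
      DerivT Θ Γ γ φ → FOcons Γ' Γ → DerivT Θ Γ' γ φ
  | depar {Γ : List (FO σ Empty)} {γ : FO σ Empty} {φ : IF σ} (p : ℕ) :
      DerivT Θ Γ γ φ → p ∉ γ.freeP → DerivT Θ [FO.exP p (bigAnd Γ)] γ φ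
  | split {Γ₁ Γ₂ : List (FO σ Empty)} {γ : FO σ Empty} {φ : IF σ} :
      DerivT Θ Γ₁ γ φ → DerivT Θ Γ₂ γ φ →
      DerivT Θ [(bigAnd Γ₁).or (bigAnd Γ₂)] γ φ
  | theta {Γ : List (FO σ Empty)} {γ : FO σ Empty} {φ : IF σ}
      (k : ℕ) (θ : FO (σ.addRels k) Empty)
      (hΘ : (⟨k, θ⟩ : (k : ℕ) × FO (σ.addRels k) Empty) ∈ Θ)
      (S : Fin k → σ.Rel) (hinj : Function.Injective S)
      (hfresh : ∀ i, S i ∉ relsList Γ ∪ γ.rels ∪ φ.rels) :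
      DerivT Θ (instRels S θ :: Γ) γ φ → DerivT Θ Γ γ φ

/-- The basic proof system (no PS-Θ rule is applicable for `Θ = ∅`). -/
abbrev Deriv : List (FO σ Empty) → FO σ Empty → IF σ → Prop :=
  DerivT (∅ : Theory σ)

/-- Validity of a sequent `Γ | γ ⊢ φ`. -/
def SeqValid (Γ : List (FO σ Empty)) (γ : FO σ Empty) (φ : IF σ) : Prop :=
  ∀ (M : Type) (I : Str σ M) (h : ℕ → M),
    (∀ ψ ∈ Γ, ∀ s, FO.Sat I Empty.elim h s ψ) → ES I φ γ h


/-! ## Auxiliary machinery for the proof -/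

section AuxProof

variable {σ : Sig} {C M : Type}

/-- Structural induction principle for nested inductive `Term`. -/
theorem Term.my_ind {P : Term σ C → Prop}
    (hv : ∀ n, P (.varT n)) (hp : ∀ n, P (.varP n)) (hc : ∀ c, P (.const c))
    (ha : ∀ f ts, (∀ t ∈ ts, P t) → P (.app f ts)) : ∀ t, P t := by
  have key : ∀ (n : ℕ) (t : Term σ C), sizeOf t = n → P t := by
    intro n
    induction n using Nat.strong_induction_on with
    | _ n ih =>
      intro t ht
      cases t with
      | varT m => exact hv m
      | varP m => exact hp m
      | const c => exact hc c
      | app f ts =>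
        refine ha f ts (fun t htm => ih (sizeOf t) ?_ t rfl)
        have := List.sizeOf_lt_of_mem htm
        subst ht
        simp only [Term.app.sizeOf_spec]
        omega
  exact fun t => key (sizeOf t) t rfl

theorem mem_foldr_union {α : Type*} (g : α → Finset ℕ) (l : List α) (x : ℕ) :
    x ∈ l.foldr (fun a acc => g a ∪ acc) ∅ ↔ ∃ a ∈ l, x ∈ g a := by
  induction l with
  | nil => simp
  | cons a l ih => simp [ih]

theorem Term.eval_app (I : Str σ M) (cv : C → M) (h s : ℕ → M) (f : σ.Func)
    (ts : List (Term σ C)) :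
    (Term.app f ts).eval I cv h s = I.funcI f (ts.map (Term.eval I cv h s)) := by
  rw [Term.eval, List.attach_map_val (l := ts) (f := Term.eval I cv h s)]

theorem Term.mem_freeT_app {x : ℕ} {f : σ.Func} {ts : List (Term σ C)} :
    x ∈ (Term.app f ts).freeT ↔ ∃ t ∈ ts, x ∈ Term.freeT t := by
  rw [Term.freeT, mem_foldr_union (fun t : {t // t ∈ ts} => t.1.freeT)]
  simp

theorem Term.mem_listFreeT {x : ℕ} {ts : List (Term σ C)} :
    x ∈ Term.listFreeT ts ↔ ∃ t ∈ ts, x ∈ t.freeT :=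
  mem_foldr_union _ _ _

theorem Term.listFreeT_map {σ' : Sig} (g : Term σ' C → Term σ C)
    (ts : List (Term σ' C)) (hg : ∀ t ∈ ts, (g t).freeT = t.freeT) :
    Term.listFreeT (ts.map g) = Term.listFreeT ts := by
  ext x
  simp only [Term.mem_listFreeT, List.mem_map]
  constructor
  · rintro ⟨t, ⟨a, ha, rfl⟩, hx⟩
    exact ⟨a, ha, by rw [← hg a ha]; exact hx⟩
  · rintro ⟨a, ha, hx⟩
    exact ⟨g a, ⟨a, ha, rfl⟩, by rw [hg a ha]; exact hx⟩

theorem agreeOn.mono {V W : Finset ℕ} {f g : ℕ → M} (h : agreeOn W f g) (hVW : V ⊆ W) :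
    agreeOn V f g := fun x hx => h x (hVW hx)

theorem Term.eval_congr (I : Str σ M) (cv : C → M) (h : ℕ → M) (s s' : ℕ → M) :
    ∀ t : Term σ C, agreeOn t.freeT s s' → t.eval I cv h s = t.eval I cv h s' := by
  apply Term.my_ind
  · intro n hT
    have := hT n (by simp [Term.freeT])
    simpa [Term.eval] using this
  · intro n _; simp [Term.eval]
  · intro c _; simp [Term.eval]
  · intro f ts ih hT
    rw [Term.eval_app, Term.eval_app]
    congr 1
    refine List.map_congr_left fun t ht => ih t ht ?_
    exact fun x hx => hT x (Term.mem_freeT_app.mpr ⟨t, ht, hx⟩)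

theorem FO.sat_congr (I : Str σ M) (cv : C → M) :
    ∀ (φ : FO σ C) (h s s' : ℕ → M), agreeOn φ.freeT s s' →
      (FO.Sat I cv h s φ ↔ FO.Sat I cv h s' φ) := by
  intro φ
  induction φ with
  | eq t u =>
    intro h s s' hT
    simp only [FO.Sat]
    rw [Term.eval_congr I cv h s s' t (hT.mono (by simp [FO.freeT])),
        Term.eval_congr I cv h s s' u (hT.mono (by simp [FO.freeT]))]
  | rel R ts =>
    intro h s s' hT
    simp only [FO.Sat]
    rw [List.map_congr_left fun t ht => Term.eval_congr I cv h s s' t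
      (fun x hx => hT x (Term.mem_listFreeT.mpr ⟨t, ht, hx⟩))]
  | not φ ih => intro h s s' hT; simp only [FO.Sat]; rw [ih h s s' hT]
  | and φ ψ ih1 ih2 =>
    intro h s s' hT
    simp only [FO.Sat]
    rw [ih1 h s s' (hT.mono Finset.subset_union_left),
        ih2 h s s' (hT.mono Finset.subset_union_right)]
  | or φ ψ ih1 ih2 =>
    intro h s s' hT
    simp only [FO.Sat]
    rw [ih1 h s s' (hT.mono Finset.subset_union_left),
        ih2 h s s' (hT.mono Finset.subset_union_right)]
  | exT x φ ih =>
    intro h s s' hT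
    simp only [FO.Sat]
    refine exists_congr fun m => ih h _ _ fun v hv => ?_
    by_cases hvx : v = x
    · subst hvx; simp
    · rw [Function.update_of_ne hvx, Function.update_of_ne hvx]
      exact hT v (Finset.mem_erase.mpr ⟨hvx, hv⟩)
  | allT x φ ih =>
    intro h s s' hT
    simp only [FO.Sat]
    refine forall_congr' fun m => ih h _ _ fun v hv => ?_
    by_cases hvx : v = x
    · subst hvx; simp
    · rw [Function.update_of_ne hvx, Function.update_of_ne hvx]
      exact hT v (Finset.mem_erase.mpr ⟨hvx, hv⟩)
  | exP p φ ih =>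
    intro h s s' hT
    simp only [FO.Sat]
    exact exists_congr fun m => ih _ s s' hT
  | allP p φ ih =>
    intro h s s' hT
    simp only [FO.Sat]
    exact forall_congr' fun m => ih _ s s' hT

/-! ### Stripping the extra relation symbols from terms -/

def Term.back {k : ℕ} : Term (σ.addRels k) C → Term σ C
  | .varT n => .varT n
  | .varP n => .varP n
  | .const c => .const c
  | .app f ts => .app f (ts.attach.map fun t => t.1.back)
decreasing_by
  have := List.sizeOf_lt_of_mem t.2
  simp_wf
  omega

theorem Term.back_app {k : ℕ} (f : (σ.addRels k).Func) (ts : List (Term (σ.addRels k) C)) :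
    (Term.app f ts).back = Term.app (σ := σ) f (ts.map Term.back) := by
  rw [Term.back, List.attach_map_val (l := ts) (f := Term.back)]

theorem Term.back_eval (I : Str σ M) {k : ℕ} (Xs : Fin k → Team M) (cv : C → M)
    (h s : ℕ → M) :
    ∀ t : Term (σ.addRels k) C, t.eval (I.addRels Xs) cv h s = t.back.eval I cv h s := by
  apply Term.my_ind
  · intro n; simp [Term.eval, Term.back]
  · intro n; simp [Term.eval, Term.back]
  · intro c; simp [Term.eval, Term.back]
  · intro f ts ih
    rw [Term.back_app, Term.eval_app, Term.eval_app I cv h s f (ts.map (Term.back (σ := σ))), List.map_map]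
    exact congrArg _ (List.map_congr_left fun t ht => ih t ht)

theorem Term.back_freeT {k : ℕ} :
    ∀ t : Term (σ.addRels k) C, t.back.freeT = t.freeT := by
  apply Term.my_ind
  · intro n; simp [Term.back, Term.freeT]
  · intro n; simp [Term.back, Term.freeT]
  · intro c; simp [Term.back, Term.freeT]
  · intro f ts ih
    rw [Term.back_app]
    ext x
    simp only [Term.mem_freeT_app (σ := σ) (f := f) (ts := ts.map (Term.back (σ := σ))),
      Term.mem_freeT_app, List.mem_map]
    constructor
    · rintro ⟨t, ⟨a, ha, rfl⟩, hx⟩; exact ⟨a, ha, by rw [← ih a ha]; exact hx⟩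
    · rintro ⟨a, ha, hx⟩; exact ⟨a.back, ⟨a, ha, rfl⟩, by rw [ih a ha]; exact hx⟩

/-! ### `mapSig` along `inlHom` -/

theorem Term.mapSig_app (e : SigHom σ τ) (f : σ.Func) (ts : List (Term σ C)) :
    (Term.app f ts).mapSig e = Term.app (e.fm f) (ts.map (Term.mapSig e)) := by
  rw [Term.mapSig, List.attach_map_val (l := ts) (f := Term.mapSig e)]

theorem Term.mapSig_freeT (e : SigHom σ τ) :
    ∀ t : Term σ C, (t.mapSig e).freeT = t.freeT := by
  apply Term.my_ind
  · intro n; simp [Term.mapSig, Term.freeT]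
  · intro n; simp [Term.mapSig, Term.freeT]
  · intro c; simp [Term.mapSig, Term.freeT]
  · intro f ts ih
    rw [Term.mapSig_app]
    ext x
    simp only [Term.mem_freeT_app, List.mem_map]
    constructor
    · rintro ⟨t, ⟨a, ha, rfl⟩, hx⟩; exact ⟨a, ha, by rw [← ih a ha]; exact hx⟩
    · rintro ⟨a, ha, hx⟩; exact ⟨a.mapSig e, ⟨a, ha, rfl⟩, by rw [ih a ha]; exact hx⟩

theorem FO.mapSig_freeT (e : SigHom σ τ) :
    ∀ φ : FO σ C, (φ.mapSig e).freeT = φ.freeT := by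
  intro φ
  induction φ with
  | eq t u => simp [FO.mapSig, FO.freeT, Term.mapSig_freeT]
  | rel R ts =>
    simp only [FO.mapSig, FO.freeT]
    exact Term.listFreeT_map _ ts fun t _ => Term.mapSig_freeT e t
  | not φ ih => simp [FO.mapSig, FO.freeT, ih]
  | and φ ψ ih1 ih2 => simp [FO.mapSig, FO.freeT, ih1, ih2]
  | or φ ψ ih1 ih2 => simp [FO.mapSig, FO.freeT, ih1, ih2]
  | exT x φ ih => simp [FO.mapSig, FO.freeT, ih]
  | allT x φ ih => simp [FO.mapSig, FO.freeT, ih]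
  | exP p φ ih => simp [FO.mapSig, FO.freeT, ih]
  | allP p φ ih => simp [FO.mapSig, FO.freeT, ih]

theorem Term.mapSig_inl_eval (I : Str σ M) {k : ℕ} (Xs : Fin k → Team M) (cv : C → M)
    (h s : ℕ → M) :
    ∀ t : Term σ C, (t.mapSig (inlHom σ k)).eval (I.addRels Xs) cv h s = t.eval I cv h s := by
  apply Term.my_ind
  · intro n; simp [Term.mapSig, Term.eval]
  · intro n; simp [Term.mapSig, Term.eval]
  · intro c; simp [Term.mapSig, Term.eval]
  · intro f ts ih
    rw [Term.mapSig_app, Term.eval_app, Term.eval_app, List.map_map]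
    exact congrArg _ (List.map_congr_left fun t ht => ih t ht)

theorem FO.mapSig_inl_sat (I : Str σ M) {k : ℕ} (Xs : Fin k → Team M) (cv : C → M) :
    ∀ (φ : FO σ C) (h s : ℕ → M),
      FO.Sat (I.addRels Xs) cv h s (φ.mapSig (inlHom σ k)) ↔ FO.Sat I cv h s φ := by
  intro φ
  induction φ with
  | eq t u => intro h s; simp [FO.mapSig, FO.Sat, Term.mapSig_inl_eval]
  | rel R ts =>
    intro h s
    simp only [FO.mapSig, FO.Sat, List.map_map]
    have hm : ts.map (Term.eval (I.addRels Xs) cv h s ∘ Term.mapSig (inlHom σ k)) =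
        ts.map (Term.eval I cv h s) :=
      List.map_congr_left fun t _ => Term.mapSig_inl_eval I Xs cv h s t
    rw [hm]
    simp [Str.addRels, inlHom]
  | not φ ih => intro h s; simp [FO.mapSig, FO.Sat, ih]
  | and φ ψ ih1 ih2 => intro h s; simp [FO.mapSig, FO.Sat, ih1, ih2]
  | or φ ψ ih1 ih2 => intro h s; simp [FO.mapSig, FO.Sat, ih1, ih2]
  | exT x φ ih => intro h s; simp only [FO.mapSig, FO.Sat]; exact exists_congr fun m => ih h _
  | allT x φ ih => intro h s; simp only [FO.mapSig, FO.Sat]; exact forall_congr' fun m => ih h _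
  | exP p φ ih => intro h s; simp only [FO.mapSig, FO.Sat]; exact exists_congr fun m => ih _ s
  | allP p φ ih => intro h s; simp only [FO.mapSig, FO.Sat]; exact forall_congr' fun m => ih _ s

/-! ### Substitution of parameter variables -/

def Term.psub (f : ℕ → Term σ C) : Term σ C → Term σ C
  | .varT n => .varT n
  | .varP n => f n
  | .const c => .const c
  | .app g ts => .app g (ts.attach.map fun t => t.1.psub f)
decreasing_by
  have := List.sizeOf_lt_of_mem t.2
  simp_wf
  omega

theorem Term.psub_app (f : ℕ → Term σ C) (g : σ.Func) (ts : List (Term σ C)) :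
    (Term.app g ts).psub f = Term.app g (ts.map (Term.psub f)) := by
  rw [Term.psub, List.attach_map_val (l := ts) (f := Term.psub f)]

def FO.psub (f : ℕ → Term σ C) : FO σ C → FO σ C
  | .eq t u => .eq (t.psub f) (u.psub f)
  | .rel R ts => .rel R (ts.map (Term.psub f))
  | .not φ => .not (φ.psub f)
  | .and φ χ => .and (φ.psub f) (χ.psub f)
  | .or φ χ => .or (φ.psub f) (χ.psub f)
  | .exT x φ => .exT x (φ.psub f)
  | .allT x φ => .allT x (φ.psub f)
  | .exP p φ => .exP p (φ.psub (Function.update f p (.varP p)))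
  | .allP p φ => .allP p (φ.psub (Function.update f p (.varP p)))

/-- Substitutions mapping each parameter variable either to itself or to a
constant. -/
def Simple (f : ℕ → Term σ C) : Prop :=
  ∀ n, f n = .varP n ∨ ∃ c, f n = .const c

theorem Simple.update {f : ℕ → Term σ C} (hf : Simple f) (p : ℕ) :
    Simple (Function.update f p (.varP p)) := by
  intro n
  by_cases hn : n = p
  · subst hn; left; simp
  · rw [Function.update_of_ne hn]; exact hf n

/-- The parameter assignment induced by a simple substitution. -/
def pval (cv : C → M) (h : ℕ → M) (n : ℕ) : Term σ C → M
  | .const c => cv c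
  | _ => h n

def pv (cv : C → M) (h : ℕ → M) (f : ℕ → Term σ C) (n : ℕ) : M :=
  pval cv h n (f n)

theorem pv_update (cv : C → M) (h : ℕ → M) (f : ℕ → Term σ C) (p : ℕ) (m : M)
    (hf : Simple f) :
    pv cv (Function.update h p m) (Function.update f p (Term.varP p)) =
      Function.update (pv cv h f) p m := by
  funext n
  by_cases hn : n = p
  · subst hn; simp [pv, pval]
  · rw [Function.update_of_ne hn]
    rcases hf n with h1 | ⟨c, h1⟩ <;>
      simp [pv, pval, h1, Function.update_of_ne hn]

theorem Term.psub_eval (I : Str σ M) (cv : C → M) (h s : ℕ → M) {f : ℕ → Term σ C}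
    (hf : Simple f) :
    ∀ t : Term σ C, (t.psub f).eval I cv h s = t.eval I cv (pv cv h f) s := by
  apply Term.my_ind
  · intro n; simp [Term.psub, Term.eval]
  · intro n
    rcases hf n with h1 | ⟨c, h1⟩ <;>
      simp [Term.psub, Term.eval, h1, pv, pval]
  · intro c; simp [Term.psub, Term.eval]
  · intro g ts ih
    rw [Term.psub_app, Term.eval_app, Term.eval_app, List.map_map]
    exact congrArg _ (List.map_congr_left fun t ht => ih t ht)

theorem Term.psub_freeT {f : ℕ → Term σ C} (hf : Simple f) :
    ∀ t : Term σ C, (t.psub f).freeT = t.freeT := by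
  apply Term.my_ind
  · intro n; simp [Term.psub, Term.freeT]
  · intro n
    rcases hf n with h1 | ⟨c, h1⟩ <;> simp [Term.psub, h1, Term.freeT]
  · intro c; simp [Term.psub, Term.freeT]
  · intro g ts ih
    rw [Term.psub_app]
    ext x
    simp only [Term.mem_freeT_app, List.mem_map]
    constructor
    · rintro ⟨t, ⟨a, ha, rfl⟩, hx⟩; exact ⟨a, ha, by rw [← ih a ha]; exact hx⟩
    · rintro ⟨a, ha, hx⟩; exact ⟨a.psub f, ⟨a, ha, rfl⟩, by rw [ih a ha]; exact hx⟩

theorem FO.psub_freeT :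
    ∀ (φ : FO σ C) (f : ℕ → Term σ C), Simple f → (φ.psub f).freeT = φ.freeT := by
  intro φ
  induction φ with
  | eq t u => intro f hf; simp [FO.psub, FO.freeT, Term.psub_freeT hf]
  | rel R ts =>
    intro f hf
    simp only [FO.psub, FO.freeT]
    exact Term.listFreeT_map _ ts fun t _ => Term.psub_freeT hf t
  | not φ ih => intro f hf; simp [FO.psub, FO.freeT, ih f hf]
  | and φ ψ ih1 ih2 => intro f hf; simp [FO.psub, FO.freeT, ih1 f hf, ih2 f hf]
  | or φ ψ ih1 ih2 => intro f hf; simp [FO.psub, FO.freeT, ih1 f hf, ih2 f hf]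
  | exT x φ ih => intro f hf; simp [FO.psub, FO.freeT, ih f hf]
  | allT x φ ih => intro f hf; simp [FO.psub, FO.freeT, ih f hf]
  | exP p φ ih => intro f hf; simp [FO.psub, FO.freeT, ih _ (hf.update p)]
  | allP p φ ih => intro f hf; simp [FO.psub, FO.freeT, ih _ (hf.update p)]

theorem FO.psub_sat (I : Str σ M) (cv : C → M) :
    ∀ (φ : FO σ C) (f : ℕ → Term σ C), Simple f → ∀ (h s : ℕ → M),
      (FO.Sat I cv h s (φ.psub f) ↔ FO.Sat I cv (pv cv h f) s φ) := by
  intro φ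
  induction φ with
  | eq t u => intro f hf h s; simp [FO.psub, FO.Sat, Term.psub_eval I cv h s hf]
  | rel R ts =>
    intro f hf h s
    simp only [FO.psub, FO.Sat, List.map_map]
    have hm : ts.map (Term.eval I cv h s ∘ Term.psub f) =
        ts.map (Term.eval I cv (pv cv h f) s) :=
      List.map_congr_left fun t _ => Term.psub_eval I cv h s hf t
    rw [hm]
  | not φ ih => intro f hf h s; simp [FO.psub, FO.Sat, ih f hf h s]
  | and φ ψ ih1 ih2 => intro f hf h s; simp [FO.psub, FO.Sat, ih1 f hf h s, ih2 f hf h s]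
  | or φ ψ ih1 ih2 => intro f hf h s; simp [FO.psub, FO.Sat, ih1 f hf h s, ih2 f hf h s]
  | exT x φ ih =>
    intro f hf h s
    simp only [FO.psub, FO.Sat]
    exact exists_congr fun m => ih f hf h _
  | allT x φ ih =>
    intro f hf h s
    simp only [FO.psub, FO.Sat]
    exact forall_congr' fun m => ih f hf h _
  | exP p φ ih =>
    intro f hf h s
    simp only [FO.psub, FO.Sat]
    refine exists_congr fun m => ?_
    rw [ih _ (hf.update p) _ s, pv_update cv h f p m hf]
  | allP p φ ih =>
    intro f hf h s
    simp only [FO.psub, FO.Sat]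
    refine forall_congr' fun m => ?_
    rw [ih _ (hf.update p) _ s, pv_update cv h f p m hf]

/-! ### Semantics of the auxiliary connectives -/

theorem sat_verum (I : Str σ M) (cv : C → M) (h s : ℕ → M) :
    FO.Sat I cv h s FO.verum := by
  simp [FO.verum, FO.Sat]

theorem freeT_verum : (FO.verum : FO σ C).freeT = ∅ := by
  simp [FO.verum, FO.freeT, Term.freeT]

theorem sat_bigAnd (I : Str σ M) (cv : C → M) (h s : ℕ → M) :
    ∀ Γ : List (FO σ C), FO.Sat I cv h s (bigAnd Γ) ↔ ∀ γ ∈ Γ, FO.Sat I cv h s γ := by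
  intro Γ
  induction Γ with
  | nil => simpa [bigAnd] using sat_verum I cv h s
  | cons γ Γ ih =>
    show FO.Sat I cv h s (.and γ (bigAnd Γ)) ↔ _
    simp only [FO.Sat, ih, List.mem_cons]
    constructor
    · rintro ⟨h1, h2⟩ δ (rfl | hδ)
      · exact h1
      · exact h2 δ hδ
    · intro hall
      exact ⟨hall γ (Or.inl rfl), fun δ hδ => hall δ (Or.inr hδ)⟩

theorem freeT_bigAnd {x : ℕ} :
    ∀ Γ : List (FO σ C), x ∈ (bigAnd Γ).freeT → ∃ γ ∈ Γ, x ∈ γ.freeT := by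
  intro Γ
  induction Γ with
  | nil => intro h; rw [show bigAnd ([] : List (FO σ C)) = FO.verum from rfl, freeT_verum] at h; simp at h
  | cons γ Γ ih =>
    intro h
    rw [show bigAnd (γ :: Γ) = .and γ (bigAnd Γ) from rfl] at h
    rcases Finset.mem_union.mp h with h | h
    · exact ⟨γ, List.mem_cons_self, h⟩
    · obtain ⟨δ, hδ, hx⟩ := ih h
      exact ⟨δ, List.mem_cons_of_mem _ hδ, hx⟩

theorem sat_exTs (I : Str σ M) (cv : C → M) (h : ℕ → M) (φ : FO σ C) :
    ∀ (l : List ℕ) (s : ℕ → M),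
      FO.Sat I cv h s (exTs l φ) ↔
        ∃ s', (∀ x, x ∉ l → s' x = s x) ∧ FO.Sat I cv h s' φ := by
  intro l
  induction l with
  | nil =>
    intro s
    constructor
    · intro hs; exact ⟨s, fun _ _ => rfl, hs⟩
    · rintro ⟨s', hs', hsat⟩
      have : s' = s := funext fun x => hs' x (by simp)
      rwa [this] at hsat
  | cons a l ih =>
    intro s
    show (∃ m, FO.Sat I cv h (Function.update s a m) (exTs l φ)) ↔ _
    constructor
    · rintro ⟨m, hm⟩
      obtain ⟨s', hs', hsat⟩ := (ih (Function.update s a m)).mp hm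
      refine ⟨s', fun x hx => ?_, hsat⟩
      rw [hs' x (fun hmem => hx (List.mem_cons_of_mem a hmem)),
        Function.update_of_ne (fun hxa => hx (by simp [hxa]))]
    · rintro ⟨s', hs', hsat⟩
      refine ⟨s' a, (ih _).mpr ⟨s', fun x hx => ?_, hsat⟩⟩
      by_cases hxa : x = a
      · subst hxa; simp
      · rw [Function.update_of_ne hxa]
        exact hs' x (by simp [hxa, hx])

theorem mem_freeT_exTs {x : ℕ} (φ : FO σ C) :
    ∀ l : List ℕ, x ∈ (exTs l φ).freeT ↔ x ∈ φ.freeT ∧ x ∉ l := by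
  intro l
  induction l with
  | nil => simp [exTs]
  | cons a l ih =>
    show x ∈ (FO.exT a (exTs l φ)).freeT ↔ _
    rw [show (FO.exT a (exTs l φ)).freeT = ((exTs l φ).freeT).erase a from rfl]
    rw [Finset.mem_erase, ih]
    simp only [List.mem_cons]
    tauto

theorem sat_eqL (I : Str σ M) (cv : C → M) (h s : ℕ → M) :
    ∀ l1 l2 : List (Term σ C),
      FO.Sat I cv h s (eqL l1 l2) ↔
        ∀ (j : ℕ) (h1 : j < l1.length) (h2 : j < l2.length),
          (l1[j]).eval I cv h s = (l2[j]).eval I cv h s := by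
  intro l1
  induction l1 with
  | nil => intro l2; simp [eqL, bigAnd, sat_verum]
  | cons a l1 ih =>
    intro l2
    cases l2 with
    | nil => simp [eqL, bigAnd, sat_verum]
    | cons b l2 =>
      show FO.Sat I cv h s (.and (.eq a b) (eqL l1 l2)) ↔ _
      have hand : FO.Sat I cv h s (.and (.eq a b) (eqL l1 l2)) ↔
          (a.eval I cv h s = b.eval I cv h s ∧ FO.Sat I cv h s (eqL l1 l2)) := Iff.rfl
      rw [hand, ih]
      constructor
      · rintro ⟨h1, h2⟩ j hj1 hj2
        cases j with
        | zero => simpa using h1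
        | succ j =>
          simp only [List.getElem_cons_succ]
          exact h2 j (by simpa using hj1) (by simpa using hj2)
      · intro hall
        refine ⟨hall 0 (by simp) (by simp), fun j hj1 hj2 => ?_⟩
        exact hall (j + 1) (by simpa using hj1) (by simpa using hj2)

theorem freeT_eqL {x : ℕ} :
    ∀ l1 l2 : List (Term σ C), x ∈ (eqL l1 l2).freeT →
      x ∈ Term.listFreeT l1 ∪ Term.listFreeT l2 := by
  intro l1
  induction l1 with
  | nil => intro l2 hx; rw [show eqL ([] : List (Term σ C)) l2 = FO.verum from rfl, freeT_verum] at hx; simp at hx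
  | cons a l1 ih =>
    intro l2 hx
    cases l2 with
    | nil => rw [show eqL (a :: l1) ([] : List (Term σ C)) = FO.verum from rfl, freeT_verum] at hx; simp at hx
    | cons b l2 =>
      rw [show eqL (a :: l1) (b :: l2) = .and (.eq a b) (eqL l1 l2) from rfl] at hx
      rcases Finset.mem_union.mp hx with hx | hx
      · rcases Finset.mem_union.mp hx with hx | hx
        · exact Finset.mem_union_left _ (Finset.mem_union_left _ hx)
        · exact Finset.mem_union_right _ (Finset.mem_union_left _ hx)
      · rcases Finset.mem_union.mp (ih l2 hx) with hx | hx
        · exact Finset.mem_union_left _ (Finset.mem_union_right _ hx)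
        · exact Finset.mem_union_right _ (Finset.mem_union_right _ hx)

theorem Team.exteq : ∀ {X Y : Team M}, X.dom = Y.dom → X.rows = Y.rows → X = Y
  | ⟨d, r, p⟩, ⟨d', r', p'⟩, h1, h2 => by
    cases h1; cases h2; rfl

/-! ### Translation of a team-relation atom -/

/-- A base for fresh variables. -/
def frB (Vi : Finset ℕ) (ts : List (Term σ M)) : ℕ :=
  (Term.listFreeT ts ∪ Vi).sup id + 1

/-- Fresh variables `w₀, …, w_{n-1}`. -/
def frW (Vi : Finset ℕ) (ts : List (Term σ M)) : List ℕ :=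
  (List.range (Vi.sort (· ≤ ·)).length).map (fun j => frB Vi ts + j)

theorem lt_frB {Vi : Finset ℕ} {ts : List (Term σ M)} {x : ℕ}
    (hx : x ∈ Term.listFreeT ts ∪ Vi) : x < frB Vi ts := by
  have := Finset.le_sup (f := id) hx
  simp only [id] at this
  simp only [frB]
  omega

theorem mem_frW {Vi : Finset ℕ} {ts : List (Term σ M)} {w : ℕ} :
    w ∈ frW Vi ts ↔ ∃ j, j < (Vi.sort (· ≤ ·)).length ∧ w = frB Vi ts + j := by
  simp [frW, eq_comm]

theorem frW_length {Vi : Finset ℕ} {ts : List (Term σ M)} :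
    (frW Vi ts).length = (Vi.sort (· ≤ ·)).length := by simp [frW]

theorem frW_get {Vi : Finset ℕ} {ts : List (Term σ M)} {j : ℕ}
    (hj : j < (frW Vi ts).length) : (frW Vi ts)[j] = frB Vi ts + j := by
  simp [frW]

theorem mem_listFreeT_varT {l : List ℕ} {x : ℕ} :
    x ∈ Term.listFreeT (l.map (Term.varT : ℕ → Term σ M)) ↔ x ∈ l := by
  rw [Term.mem_listFreeT]
  constructor
  · rintro ⟨t, ht, hx⟩
    obtain ⟨a, ha, rfl⟩ := List.mem_map.mp ht
    have hxa : x = a := by simpa [Term.freeT] using hx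
    exact hxa ▸ ha
  · intro hx
    exact ⟨Term.varT x, List.mem_map_of_mem hx, by simp [Term.freeT]⟩

/-- The first-order translation of an atom `R(ts)` where `R` is the relation
of a team definable by `ψi` on the domain `Vi`. -/
def atomTr (ψi : FO σ M) (Vi : Finset ℕ) (ts : List (Term σ M)) : FO σ M :=
  if ts.length = (Vi.sort (· ≤ ·)).length then
    exTs (frW Vi ts)
      (.and (eqL ((frW Vi ts).map .varT) ts)
        (exTs (Vi.sort (· ≤ ·))
          (.and (eqL ((Vi.sort (· ≤ ·)).map .varT) ((frW Vi ts).map .varT)) ψi)))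
  else .not FO.verum

theorem atomTr_freeT {ψi : FO σ M} {Vi : Finset ℕ} (hψ : ψi.freeT ⊆ Vi)
    (ts : List (Term σ M)) : (atomTr ψi Vi ts).freeT ⊆ Term.listFreeT ts := by
  intro x hx
  unfold atomTr at hx
  split at hx
  case isTrue hlen =>
    rw [mem_freeT_exTs] at hx
    obtain ⟨hx, hxw⟩ := hx
    rcases Finset.mem_union.mp hx with hx | hx
    · rcases Finset.mem_union.mp (freeT_eqL _ _ hx) with hx | hx
      · exact absurd (mem_listFreeT_varT.mp hx) hxw
      · exact hx
    · exfalso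
      rw [mem_freeT_exTs] at hx
      obtain ⟨hx, hxv⟩ := hx
      rcases Finset.mem_union.mp hx with hx | hx
      · rcases Finset.mem_union.mp (freeT_eqL _ _ hx) with hx | hx
        · exact hxv (mem_listFreeT_varT.mp hx)
        · exact hxw (mem_listFreeT_varT.mp hx)
      · exact hxv (Finset.mem_sort (· ≤ ·) |>.mpr (hψ hx))
  case isFalse _ =>
    rw [show (FO.not FO.verum).freeT = (FO.verum : FO σ M).freeT from rfl,
      freeT_verum] at hx
    simp at hx

theorem atomTr_sat (I : Str σ M) {ψi : FO σ M} {X : Team M} {Vi : Finset ℕ}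
    (_hψ : ψi.freeT ⊆ Vi) (hdom : X.dom = Vi)
    (hrows : ∀ h₀ s₀ : ℕ → M, s₀ ∈ X.rows ↔ FO.Sat I id h₀ s₀ ψi)
    (ts : List (Term σ M)) (h s : ℕ → M) :
    FO.Sat I id h s (atomTr ψi Vi ts) ↔ X.relOf (ts.map (Term.eval I id h s)) := by
  unfold atomTr
  split
  case isFalse hlen =>
    have hno : ¬ X.relOf (ts.map (Term.eval I id h s)) := by
      rintro ⟨s₀, _, hl⟩
      apply hlen
      have := congrArg List.length hl
      simpa [hdom] using this
    constructor
    · intro hsat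
      exact absurd (sat_verum I id h s) hsat
    · intro hr
      exact absurd hr hno
  case isTrue hlen =>
    set e := Term.eval I id h s with he
    set vs := Vi.sort (· ≤ ·) with hvs
    set b := frB Vi ts with hb
    have hcard : vs.length = Vi.card := Finset.length_sort _
    have hbj_not_Vi : ∀ j : ℕ, (b + j) ∉ Vi := by
      intro j hmem
      have := lt_frB (ts := ts) (Finset.mem_union_right _ hmem)
      omega
    have hts_not_frW : ∀ x ∈ Term.listFreeT ts, x ∉ frW Vi ts := by
      intro x hx hmem
      obtain ⟨j, _, rfl⟩ := mem_frW.mp hmem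
      have := lt_frB (Vi := Vi) (Finset.mem_union_left _ hx)
      omega
    rw [show X.relOf (ts.map e) = ∃ s₀ ∈ X.rows, ts.map e = (X.dom.sort (· ≤ ·)).map s₀
      from rfl, hdom]
    rw [sat_exTs]
    constructor
    · rintro ⟨s₁, hs₁, hsat⟩
      simp only [FO.Sat] at hsat
      obtain ⟨hA, hB⟩ := hsat
      rw [sat_eqL] at hA
      rw [sat_exTs] at hB
      obtain ⟨s₂, hs₂, hB⟩ := hB
      simp only [FO.Sat] at hB
      obtain ⟨hE, hψsat⟩ := hB
      rw [sat_eqL] at hE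
      have hA' : ∀ (j : ℕ) (hj : j < vs.length), s₁ (b + j) = e (ts[j]'(by omega)) := by
        intro j hj
        have h1 : j < ((frW Vi ts).map (Term.varT (σ := σ) (C := M))).length := by
          rw [List.length_map, frW_length]; exact hj
        have h2 : j < ts.length := by omega
        have := hA j h1 h2
        rw [List.getElem_map, frW_get (by rw [frW_length]; exact hj)] at this
        rw [Term.eval_congr I id h s₁ s (ts[j]'h2)
          (fun x hx => hs₁ x (hts_not_frW x (Term.mem_listFreeT.mpr ⟨_, List.getElem_mem h2, hx⟩)))] at this
        simpa [Term.eval, he] using this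
      have hE' : ∀ (j : ℕ) (hj : j < vs.length), s₂ (vs[j]'hj) = s₁ (b + j) := by
        intro j hj
        have h1 : j < (vs.map (Term.varT (σ := σ) (C := M))).length := by
          rw [List.length_map]; exact hj
        have h2 : j < ((frW Vi ts).map (Term.varT (σ := σ) (C := M))).length := by
          rw [List.length_map, frW_length]; exact hj
        have := hE j h1 h2
        rw [List.getElem_map, List.getElem_map,
          frW_get (by rw [frW_length]; exact hj)] at this
        have hnv : (b + j) ∉ vs := fun hmem => hbj_not_Vi j (Finset.mem_sort (· ≤ ·) |>.mp hmem)
        simp only [Term.eval] at this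
        rw [this, hs₂ _ hnv]
      refine ⟨s₂, (hrows h s₂).mpr hψsat, ?_⟩
      refine List.ext_getElem (by simp; omega) ?_
      intro j hj1 hj2
      have hj : j < vs.length := by simp at hj2; omega
      have hjt : j < ts.length := by omega
      rw [List.getElem_map, List.getElem_map]
      rw [hE' j hj, hA' j hj]
    · rintro ⟨s₀, hs₀, hl⟩
      have hpt : ∀ (j : ℕ) (hj : j < vs.length),
          e (ts[j]'(by omega)) = s₀ (vs[j]'hj) := by
        intro j hj
        have h1 : j < (ts.map e).length := by simp; omega
        have := List.getElem_of_eq hl h1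
        simpa using this
      classical
      set s₁ : ℕ → M := fun x =>
        if b ≤ x ∧ x - b < vs.length then (ts.map e).getD (x - b) (s₀ 0) else s x with hs₁def
      have hs₁off : ∀ x, x ∉ frW Vi ts → s₁ x = s x := by
        intro x hx
        rw [hs₁def]
        dsimp only
        rw [if_neg]
        rintro ⟨hbx, hlt⟩
        exact hx (mem_frW.mpr ⟨x - b, by rwa [← hvs], by rw [← hb]; omega⟩)
      have hs₁get : ∀ (j : ℕ) (hj : j < vs.length), s₁ (b + j) = e (ts[j]'(by omega)) := by
        intro j hj
        rw [hs₁def]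
        dsimp only
        rw [if_pos ⟨by omega, by omega⟩]
        have hbj : b + j - b = j := by omega
        rw [hbj, List.getD_eq_getElem _ _ (by simp; omega)]
        simp
      set s₂ : ℕ → M := fun x => if x ∈ Vi then s₀ x else s₁ x with hs₂def
      have hs₂off : ∀ x, x ∉ vs → s₂ x = s₁ x := by
        intro x hx
        rw [hs₂def]
        dsimp only
        rw [if_neg (fun hmem => hx (Finset.mem_sort (· ≤ ·) |>.mpr hmem))]
      have hsagree : ∀ x ∈ Term.listFreeT ts, s₁ x = s x :=
        fun x hx => hs₁off x (hts_not_frW x hx)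
      refine ⟨s₁, hs₁off, ?_, ?_⟩
      · rw [sat_eqL]
        intro j hj1 hj2
        have hj : j < vs.length := by rw [List.length_map, frW_length] at hj1; exact hj1
        rw [List.getElem_map, frW_get (by rw [frW_length]; exact hj)]
        have : (ts[j]'hj2).eval I id h s₁ = e (ts[j]'hj2) := by
          rw [he]
          exact Term.eval_congr I id h s₁ s _
            (fun x hx => hsagree x (Term.mem_listFreeT.mpr ⟨_, List.getElem_mem hj2, hx⟩))
        rw [this]
        simp only [Term.eval]
        exact hs₁get j hj
      · rw [sat_exTs]
        refine ⟨s₂, hs₂off, ?_, ?_⟩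
        · rw [sat_eqL]
          intro j hj1 hj2
          have hj : j < vs.length := by rw [List.length_map] at hj1; exact hj1
          rw [List.getElem_map, List.getElem_map,
            frW_get (by rw [frW_length]; exact hj)]
          simp only [Term.eval]
          have hv_mem : (vs[j]'hj) ∈ Vi :=
            Finset.mem_sort (· ≤ ·) |>.mp (List.getElem_mem hj)
          have h1 : s₂ (vs[j]'hj) = s₀ (vs[j]'hj) := by
            rw [hs₂def]; dsimp only; rw [if_pos hv_mem]
          have h2 : s₂ (b + j) = s₁ (b + j) := by
            rw [hs₂def]; dsimp only; rw [if_neg (hbj_not_Vi j)]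
          rw [h1, h2, hs₁get j hj, hpt j hj]
        · refine (hrows h s₂).mp (X.mem_congr (fun x hx => ?_) hs₀)
          have hxVi : x ∈ Vi := hdom ▸ hx
          rw [hs₂def]
          dsimp only
          rw [if_pos hxVi]

/-! ### The full translation -/

def Tr {k : ℕ} (ψ : Fin k → FO σ M) (Vs : Fin k → Finset ℕ) :
    (ℕ → Term σ M) → FO (σ.addRels k) M → FO σ M
  | f, .eq t u => .eq (t.back.psub f) (u.back.psub f)
  | f, .rel (Sum.inl R) ts => .rel R (ts.map fun t => t.back.psub f)
  | f, .rel (Sum.inr i) ts => atomTr (ψ i) (Vs i) (ts.map fun t => t.back.psub f)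
  | f, .not φ => .not (Tr ψ Vs f φ)
  | f, .and φ χ => .and (Tr ψ Vs f φ) (Tr ψ Vs f χ)
  | f, .or φ χ => .or (Tr ψ Vs f φ) (Tr ψ Vs f χ)
  | f, .exT x φ => .exT x (Tr ψ Vs f φ)
  | f, .allT x φ => .allT x (Tr ψ Vs f φ)
  | f, .exP p φ => .exP p (Tr ψ Vs (Function.update f p (.varP p)) φ)
  | f, .allP p φ => .allP p (Tr ψ Vs (Function.update f p (.varP p)) φ)

theorem Tr_freeT {k : ℕ} (ψ : Fin k → FO σ M) (Vs : Fin k → Finset ℕ)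
    (H1 : ∀ i, (ψ i).freeT ⊆ Vs i) :
    ∀ (φ : FO (σ.addRels k) M) (f : ℕ → Term σ M), Simple f →
      (Tr ψ Vs f φ).freeT ⊆ φ.freeT := by
  intro φ
  induction φ with
  | eq t u =>
    intro f hf
    simp only [Tr, FO.freeT]
    rw [Term.psub_freeT hf, Term.psub_freeT hf, Term.back_freeT, Term.back_freeT]
  | rel R ts =>
    intro f hf
    cases R with
    | inl R =>
      simp only [Tr, FO.freeT]
      rw [Term.listFreeT_map _ ts
        (fun t _ => by rw [Term.psub_freeT hf, Term.back_freeT])]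
    | inr i =>
      simp only [Tr, FO.freeT]
      refine (atomTr_freeT (H1 i) _).trans ?_
      rw [Term.listFreeT_map _ ts
        (fun t _ => by rw [Term.psub_freeT hf, Term.back_freeT])]
  | not φ ih => intro f hf; simp only [Tr, FO.freeT]; exact ih f hf
  | and φ χ ih1 ih2 =>
    intro f hf
    simp only [Tr, FO.freeT]
    exact Finset.union_subset_union (ih1 f hf) (ih2 f hf)
  | or φ χ ih1 ih2 =>
    intro f hf
    simp only [Tr, FO.freeT]
    exact Finset.union_subset_union (ih1 f hf) (ih2 f hf)
  | exT x φ ih =>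
    intro f hf
    simp only [Tr, FO.freeT]
    exact Finset.erase_subset_erase x (ih f hf)
  | allT x φ ih =>
    intro f hf
    simp only [Tr, FO.freeT]
    exact Finset.erase_subset_erase x (ih f hf)
  | exP p φ ih => intro f hf; simp only [Tr, FO.freeT]; exact ih _ (hf.update p)
  | allP p φ ih => intro f hf; simp only [Tr, FO.freeT]; exact ih _ (hf.update p)

theorem Tr_sat (I : Str σ M) {k : ℕ} (Xs : Fin k → Team M) (ψ : Fin k → FO σ M)
    (Vs : Fin k → Finset ℕ)
    (H1 : ∀ i, (ψ i).freeT ⊆ Vs i) (H2 : ∀ i, (Xs i).dom = Vs i)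
    (H3 : ∀ (i : Fin k) (h₀ s₀ : ℕ → M), s₀ ∈ (Xs i).rows ↔ FO.Sat I id h₀ s₀ (ψ i)) :
    ∀ (φ : FO (σ.addRels k) M) (f : ℕ → Term σ M), Simple f → ∀ h s : ℕ → M,
      (FO.Sat I id h s (Tr ψ Vs f φ) ↔ FO.Sat (I.addRels Xs) id (pv id h f) s φ) := by
  intro φ
  induction φ with
  | eq t u =>
    intro f hf h s
    simp only [Tr, FO.Sat]
    rw [Term.psub_eval I id h s hf, Term.psub_eval I id h s hf,
      ← Term.back_eval I Xs id (pv id h f) s t, ← Term.back_eval I Xs id (pv id h f) s u]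
  | rel R ts =>
    intro f hf h s
    have hm : ts.map (Term.eval I id h s ∘ fun t => t.back.psub f) =
        ts.map (Term.eval (I.addRels Xs) id (pv id h f) s) :=
      List.map_congr_left fun t _ => by
        simp only [Function.comp_apply]
        rw [Term.psub_eval I id h s hf, ← Term.back_eval I Xs id (pv id h f) s t]
    cases R with
    | inl R =>
      simp only [Tr, FO.Sat, List.map_map]
      rw [hm]
      exact Iff.rfl
    | inr i =>
      simp only [Tr]
      rw [atomTr_sat I (H1 i) (H2 i) (H3 i) (ts.map fun t => t.back.psub f) h s,
        List.map_map, hm]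
      exact Iff.rfl
  | not φ ih => intro f hf h s; simp only [Tr, FO.Sat]; rw [ih f hf h s]
  | and φ χ ih1 ih2 =>
    intro f hf h s
    simp only [Tr, FO.Sat]
    rw [ih1 f hf h s, ih2 f hf h s]
  | or φ χ ih1 ih2 =>
    intro f hf h s
    simp only [Tr, FO.Sat]
    rw [ih1 f hf h s, ih2 f hf h s]
  | exT x φ ih =>
    intro f hf h s
    simp only [Tr, FO.Sat]
    exact exists_congr fun m => ih f hf h _
  | allT x φ ih =>
    intro f hf h s
    simp only [Tr, FO.Sat]
    exact forall_congr' fun m => ih f hf h _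
  | exP p φ ih =>
    intro f hf h s
    simp only [Tr, FO.Sat]
    refine exists_congr fun m => ?_
    rw [ih _ (hf.update p) (Function.update h p m) s, pv_update id h f p m hf]
  | allP p φ ih =>
    intro f hf h s
    simp only [Tr, FO.Sat]
    refine forall_congr' fun m => ?_
    rw [ih _ (hf.update p) (Function.update h p m) s, pv_update id h f p m hf]

end AuxProof

/-- The least general model over `M` consists exactly of
the teams definable by first-order formulas with element parameters:
`LDef I` is a general model, it is contained in every general model, and it
equals the intersection `Least I` of all general models. -/
theorem least_general_model_char {σ : Sig} {M : Type} (I : Str σ M) :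
    IsGenModel I (LDef I) ∧ (∀ G : Set (Team M), IsGenModel I G → LDef I ⊆ G) ∧
      Least I = LDef I := by
  have hgen : IsGenModel I (LDef I) := by
    intro k Xs hXs φ h V hfree
    choose φs hs hsub heq using hXs
    have hsimple0 : ∀ i : Fin k, Simple (fun n => (Term.const (hs i n) : Term σ M)) :=
      fun i n => Or.inr ⟨_, rfl⟩
    set ψ : Fin k → FO σ M := fun i => (φs i).psub (fun n => Term.const (hs i n))
      with hψdef
    have H1 : ∀ i, (ψ i).freeT ⊆ (Xs i).dom := by
      intro i
      rw [hψdef]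
      dsimp only
      rw [FO.psub_freeT (φs i) _ (hsimple0 i)]
      exact hsub i
    have H3 : ∀ (i : Fin k) (h₀ s₀ : ℕ → M),
        s₀ ∈ (Xs i).rows ↔ FO.Sat I id h₀ s₀ (ψ i) := by
      intro i h₀ s₀
      rw [hψdef]
      dsimp only
      rw [FO.psub_sat I id (φs i) _ (hsimple0 i) h₀ s₀,
        show pv id h₀ (fun n => (Term.const (hs i n) : Term σ M)) = hs i from rfl]
      constructor
      · intro hmem
        rw [heq i] at hmem
        simp only [teamOf, Set.mem_setOf_eq] at hmem
        exact hmem s₀ (fun x _ => rfl)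
      · intro hsat
        rw [heq i]
        simp only [teamOf, Set.mem_setOf_eq]
        intro s' hag
        exact (FO.sat_congr I id (φs i) (hs i) s₀ s' (hag.mono (hsub i))).mp hsat
    have Hsat := Tr_sat I Xs ψ (fun i => (Xs i).dom) H1 (fun i => rfl) H3 φ
      (fun n => Term.const (h n)) (fun n => Or.inr ⟨_, rfl⟩) h
    rw [show pv id h (fun n => (Term.const (h n) : Term σ M)) = h from rfl] at Hsat
    refine ⟨Tr ψ (fun i => (Xs i).dom) (fun n => Term.const (h n)) φ, h, ?_, ?_⟩
    · exact (Tr_freeT ψ _ H1 φ _ (fun n => Or.inr ⟨_, rfl⟩)).trans hfree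
    · refine Team.exteq rfl ?_
      ext s
      simp only [teamOf, Set.mem_setOf_eq]
      constructor
      · intro hsat s' hag
        exact (Hsat s').mpr (hsat s' hag)
      · intro hsat s' hag
        exact (Hsat s').mp (hsat s' hag)
  have hsub2 : ∀ G : Set (Team M), IsGenModel I G → LDef I ⊆ G := by
    intro G hG X hX
    obtain ⟨φ, h, hfreet, heqX⟩ := hX
    have hkey := hG 0 (fun i => i.elim0) (fun i => i.elim0) (φ.mapSig (inlHom σ 0)) h X.dom
      (by rw [FO.mapSig_freeT]; exact hfreet)
    have hTeq : teamOf (I.addRels fun i : Fin 0 => i.elim0) id h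
        (φ.mapSig (inlHom σ 0)) X.dom = X := by
      conv_rhs => rw [heqX]
      refine Team.exteq rfl ?_
      ext s
      simp only [teamOf, Set.mem_setOf_eq]
      constructor
      · intro hs s' hag
        exact (FO.mapSig_inl_sat I _ id φ h s').mp (hs s' hag)
      · intro hs s' hag
        exact (FO.mapSig_inl_sat I _ id φ h s').mpr (hs s' hag)
    rwa [hTeq] at hkey
  refine ⟨hgen, hsub2, ?_⟩
  apply Set.Subset.antisymm
  · exact Set.sInter_subset_of_mem hgen
  · intro X hX
    exact Set.mem_sInter.mpr fun G hG => hsub2 G hG hX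

end IndepGeneral
end

section
/- For the least general model (M, L) over M, a team X ∈ L, and an independence logic formula φ with Free(φ) ⊆ Dom(X): (M, L) ⊨_X φ if and only if (M, G) ⊨_X φ for every general model (M, G) over M. -/
namespace IndepGeneral

variable {σ τ : Sig} {C M : Type}

theorem isGenModel_least {σ : Sig} {M : Type} (I : Str σ M) : IsGenModel I (Least I) := by
  intro k Xs hXs φ h V hV
  intro G hG
  exact hG k Xs (fun i => hXs i G hG) φ h V hV

theorem gsat_mono {σ : Sig} {M : Type} {I : Str σ M} {G G' : Set (Team M)}
    (hGG : G ⊆ G') : ∀ {φ : IF σ} {X : Team M}, GSat I G φ X → GSat I G' φ X := by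
  intro φ
  induction φ with
  | lit b R ts => exact fun h => h
  | eqLit b t u => exact fun h => h
  | indep t1 t2 t3 => exact fun h => h
  | or φ ψ ih1 ih2 =>
    rintro X ⟨Y, hY, Z, hZ, hsp, h1, h2⟩
    exact ⟨Y, hGG hY, Z, hGG hZ, hsp, ih1 h1, ih2 h2⟩
  | and φ ψ ih1 ih2 =>
    rintro X ⟨h1, h2⟩
    exact ⟨ih1 h1, ih2 h2⟩
  | ex x φ ih =>
    rintro X ⟨X', hX', hv, h1⟩
    exact ⟨X', hGG hX', hv, ih h1⟩
  | all x φ ih =>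
    intro X h
    exact ih h

/-- Satisfaction in the least general model coincides with
satisfaction in all general models. -/
theorem least_sat_iff_all {σ : Sig} {M : Type} (I : Str σ M) (X : Team M)
    (hX : X ∈ Least I) (φ : IF σ) (hfree : φ.free ⊆ X.dom) :
    GSat I (Least I) φ X ↔
      ∀ G : Set (Team M), IsGenModel I G → GSat I G φ X := by
  constructor
  · intro h G hG
    exact gsat_mono (G := Least I) (G' := G) (fun Y hY => hY G hG) h
  · intro h
    exact h (Least I) (isGenModel_least I)

end IndepGeneral
end
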